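/- arXiv:2411.05721 — 2 statements merged into one kernel-verified Lean document; each statement's English description precedes it below -/
import Mathlib

section
/- Let n and d be positive integers. For every u ∈ ℤ^d_{≥0}, the kernel of the restriction of π to the multidegree-u component S_u equals (I_R)_u, the multidegree-u component of the ideal I_R. -/
/-!
Common setup, following the paper "On the abundance of minimal border rank symmetric
tensors verifying Comon's conjecture".

* `S = ℂ[α_{i,j} : 1 ≤ i ≤ d, 1 ≤ j ≤ n]` is modeled as `MvPolynomial (Fin d × Fin n) ℂ`,
  with the `ℤ^d`-grading in which `deg α_{i,j} = e_i`; `Scomp n d u` is the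
  multidegree-`u` component (`u : Fin d → ℕ`).
* `V = ℂ[β_1,…,β_n]` is modeled as `MvPolynomial (Fin n) ℂ` with its standard grading;
  `Vcomp n N` is the degree-`N` component.
* The graded duals `T` and `P` are modeled by the same polynomial rings, with `S`
  (resp. `V`) acting by differentiation (`apolar`); `ann F` is the apolar
  (annihilator) ideal of `F`.
* A tensor `F ∈ (ℂ^n)^{⊗d}` is an element of the multidegree-`(1,…,1)` component
  `Scomp n d (fun _ => 1)` (a multilinear form in the `x_{i,j}`).
-/

open MvPolynomial Submodule Module

noncomputable section

namespace BorderComon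

/-- the multidegree-`u` graded component of `S`. -/
def Scomp (n d : ℕ) (u : Fin d → ℕ) : Submodule ℂ (MvPolynomial (Fin d × Fin n) ℂ) :=
  weightedHomogeneousSubmodule ℂ (fun p : Fin d × Fin n => Pi.single p.1 1) u

/-- the degree-`N` graded component of `V`. -/
def Vcomp (n : ℕ) (N : ℕ) : Submodule ℂ (MvPolynomial (Fin n) ℂ) :=
  homogeneousSubmodule (Fin n) ℂ N

/-- the diagonal ring map `π : S → V`, `α_{i,j} ↦ β_j`. -/
def piAlg (n d : ℕ) : MvPolynomial (Fin d × Fin n) ℂ →ₐ[ℂ] MvPolynomial (Fin n) ℂ :=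
  aeval (fun p : Fin d × Fin n => X p.2)

/-- `π` as a `ℂ`-linear map. -/
def piL (n d : ℕ) : MvPolynomial (Fin d × Fin n) ℂ →ₗ[ℂ] MvPolynomial (Fin n) ℂ :=
  (piAlg n d).toLinearMap

/-- the ring map `ρ : S → V`, `α_{1,j} ↦ β_j` and `α_{i,j} ↦ 0` for `i ≥ 2`
(rows are `0`-indexed, so the first row is row `0`). -/
def rho (n d : ℕ) : MvPolynomial (Fin d × Fin n) ℂ →ₐ[ℂ] MvPolynomial (Fin n) ℂ :=
  aeval (fun p : Fin d × Fin n => if (p.1 : ℕ) = 0 then X p.2 else 0)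

/-- the result of differentiating `F` by the monomial `X^a`:
`∂^a X^b = (∏_i b_i!/(b_i-a_i)!) X^{b-a}` (and `= 0` unless `a ≤ b`, which is
automatic since the descending factorial vanishes there). -/
def diffMon {σ : Type*} (a : σ →₀ ℕ) (F : MvPolynomial σ ℂ) : MvPolynomial σ ℂ :=
  ∑ b ∈ F.support, (F.coeff b * ∏ i ∈ a.support, ((b i).descFactorial (a i) : ℂ)) •
    monomial (b - a) (1 : ℂ)

/-- the apolarity action: `apolar F ψ = ψ ∘ F` is the result of letting `ψ` act on `F`
by differentiation, linearly in `ψ`. -/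
def apolar {σ : Type*} (F : MvPolynomial σ ℂ) : MvPolynomial σ ℂ →ₗ[ℂ] MvPolynomial σ ℂ :=
  Finsupp.lsum ℂ (fun a : σ →₀ ℕ => LinearMap.toSpanSingleton ℂ _ (diffMon a F)) ∘ₗ
    (AddMonoidAlgebra.coeffLinearEquiv ℂ).toLinearMap

/-- the apolar (annihilator) ideal `Ann(F) = {ψ : ψ ∘ F = 0}`, as a subspace. -/
def ann {σ : Type*} (F : MvPolynomial σ ℂ) : Submodule ℂ (MvPolynomial σ ℂ) :=
  LinearMap.ker (apolar F)

/-- the ideal `I_R ⊆ S` generated by the `2×2` minors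
`α_{i,j} α_{k,ℓ} − α_{i,ℓ} α_{k,j}`, `i < k`, `j < ℓ`. -/
def IR (n d : ℕ) : Ideal (MvPolynomial (Fin d × Fin n) ℂ) :=
  Ideal.span {q | ∃ i k : Fin d, ∃ j l : Fin n, i < k ∧ j < l ∧
    q = X (i, j) * X (k, l) - X (i, l) * X (k, j)}

/-- `J ⊆ S` is a (multigraded) homogeneous ideal: it is the sum of its
multigraded components. -/
def IsHomogS (n d : ℕ) (J : Ideal (MvPolynomial (Fin d × Fin n) ℂ)) : Prop :=
  Submodule.restrictScalars ℂ J = ⨆ u : Fin d → ℕ, (Submodule.restrictScalars ℂ J ⊓ Scomp n d u)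

/-- `I ⊆ V` is a homogeneous ideal: it is the sum of its graded components. -/
def IsHomogV (n : ℕ) (I : Ideal (MvPolynomial (Fin n) ℂ)) : Prop :=
  Submodule.restrictScalars ℂ I = ⨆ N : ℕ, (Submodule.restrictScalars ℂ I ⊓ Vcomp n N)

/-- the exponent redistribution underlying `ψ_u`: in the sorted list
`i_1 ≤ ⋯ ≤ i_N` of the indices of the monomial `β^γ` (value `j` occurring `γ j`
times, `N = |γ|`), row `i` receives the block of positions
`[∑_{i'<i} u i', ∑_{i'≤i} u i')`, while value `j` occupies positions
`[∑_{j'<j} γ j', ∑_{j'≤j} γ j')`; hence the exponent of `α_{i,j}` is the size of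
the intersection of these two intervals. -/
def distrib (n d : ℕ) (u : Fin d → ℕ) (γ : Fin n →₀ ℕ) : (Fin d × Fin n) →₀ ℕ :=
  Finsupp.equivFunOnFinite.symm fun p : Fin d × Fin n =>
    min (∑ i ∈ Finset.univ.filter fun i : Fin d => (i : ℕ) ≤ (p.1 : ℕ), u i)
        (∑ j ∈ Finset.univ.filter fun j : Fin n => (j : ℕ) ≤ (p.2 : ℕ), γ j)
    - max (∑ i ∈ Finset.univ.filter fun i : Fin d => (i : ℕ) < (p.1 : ℕ), u i)
          (∑ j ∈ Finset.univ.filter fun j : Fin n => (j : ℕ) < (p.2 : ℕ), γ j)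

/-- the linear map `ψ_u : V → S` sending a monomial `β_{i_1} β_{i_2} ⋯ β_{i_N}`
with `i_1 ≤ i_2 ≤ ⋯ ≤ i_N` to
`(α_{1,i_1} ⋯ α_{1,i_{u_1}}) (α_{2,i_{u_1+1}} ⋯ α_{2,i_{u_1+u_2}}) ⋯`.
(Its restriction to `Vcomp n (∑ i, u i)` is the map `ψ_u : V_{|u|} → S_u` of the
paper.) -/
def psi (n d : ℕ) (u : Fin d → ℕ) :
    MvPolynomial (Fin n) ℂ →ₗ[ℂ] MvPolynomial (Fin d × Fin n) ℂ :=
  AddMonoidAlgebra.mapDomainLinearMap ℂ ℂ (distrib n d u)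

/-- `Υ(I) = I_R + ∑_{u} ψ_u(I_{|u|}) ⊆ S`. -/
def Upsilon (n d : ℕ) (I : Ideal (MvPolynomial (Fin n) ℂ)) :
    Submodule ℂ (MvPolynomial (Fin d × Fin n) ℂ) :=
  restrictScalars ℂ (IR n d) ⊔
    ⨆ u : Fin d → ℕ, Submodule.map (psi n d u) (restrictScalars ℂ I ⊓ Vcomp n (∑ i, u i))

/-- the irrelevant ideal `B_X = ∏_{i=1}^d (α_{i,1},…,α_{i,n}) ⊆ S`. -/
def BX (n d : ℕ) : Ideal (MvPolynomial (Fin d × Fin n) ℂ) :=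
  ∏ i : Fin d, Ideal.span (Set.range fun j : Fin n => X (i, j))

/-- the irrelevant ideal `B_Y = (β_1,…,β_n) ⊆ V`. -/
def BY (n : ℕ) : Ideal (MvPolynomial (Fin n) ℂ) :=
  Ideal.span (Set.range X)

/-- `Σ(J) = ⊕_{a ≥ 0} ⊕_{s ∈ ℰ} π(J_{a𝟏+s}) ⊆ V`, where
`ℰ = {0, e_1, e_1+e_2, …, e_1+⋯+e_{d-1}}` (the element `s` with `m` ones is
`fun i => if i < m then 1 else 0`). -/
def SigmaMap (n d : ℕ) (J : Ideal (MvPolynomial (Fin d × Fin n) ℂ)) :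
    Submodule ℂ (MvPolynomial (Fin n) ℂ) :=
  ⨆ a : ℕ, ⨆ m : Fin d, Submodule.map (piL n d)
    (restrictScalars ℂ J ⊓ Scomp n d (fun i => a + if (i : ℕ) < (m : ℕ) then 1 else 0))

/-- the set of tensors of rank at most `r`: sums of `r` decomposable tensors
`v_1 ⊗ ⋯ ⊗ v_d = ∏_i (∑_j v_i(j) x_{i,j})`. -/
def rankLE (n d r : ℕ) : Set (MvPolynomial (Fin d × Fin n) ℂ) :=
  {F | ∃ v : Fin r → Fin d → Fin n → ℂ,
    F = ∑ s : Fin r, ∏ i : Fin d, ∑ j : Fin n, C (v s i j) * X (i, j)}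

/-- `F` has border rank at most `r`: coefficientwise (finitely many coefficients are
involved), `F` lies in the closure of the set of tensors of rank at most `r`. -/
def brkLE (n d : ℕ) (F : MvPolynomial (Fin d × Fin n) ℂ) (r : ℕ) : Prop :=
  (fun m => coeff m F) ∈ closure ((fun G => fun m => coeff m G) '' rankLE n d r)

/-- the border rank of a tensor. -/
def brk (n d : ℕ) (F : MvPolynomial (Fin d × Fin n) ℂ) : ℕ :=
  sInf {r | brkLE n d F r}

/-- polynomials that are sums of `r` `d`-th powers of linear forms. -/
def srankLE (n d r : ℕ) : Set (MvPolynomial (Fin n) ℂ) :=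
  {p | ∃ c : Fin r → Fin n → ℂ, p = ∑ s : Fin r, (∑ j : Fin n, C (c s j) * X j) ^ d}

/-- `p` has symmetric border rank at most `r`. -/
def sbrkLE (n d : ℕ) (p : MvPolynomial (Fin n) ℂ) (r : ℕ) : Prop :=
  (fun m => coeff m p) ∈ closure ((fun q => fun m => coeff m q) '' srankLE n d r)

/-- the symmetric border rank of a degree-`d` form. -/
def sbrk (n d : ℕ) (p : MvPolynomial (Fin n) ℂ) : ℕ :=
  sInf {r | sbrkLE n d p r}

/-- `F` is a symmetric tensor: invariant under the permutations of the `d` factors. -/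
def IsSymm (n d : ℕ) (F : MvPolynomial (Fin d × Fin n) ℂ) : Prop :=
  ∀ τ : Equiv.Perm (Fin d), rename (Prod.map τ id) F = F

/-- the degree-`d` polynomial `p_F` corresponding to a symmetric tensor `F`, obtained
by identifying all the rows of variables (`x_{i,j} ↦ y_j`); `F` is the polarization
of `p_F`. -/
def pF (n d : ℕ) (F : MvPolynomial (Fin d × Fin n) ℂ) : MvPolynomial (Fin n) ℂ :=
  rename Prod.snd F

/-- `F` is concise: the contraction `(ℂ^n)^* → (ℂ^n)^{⊗(d-1)}` of the first tensor
factor, `w ↦ F(x_{1,j} := w_j)`, is injective. -/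
def Concise (n d : ℕ) (F : MvPolynomial (Fin d × Fin n) ℂ) : Prop :=
  Function.Injective fun w : Fin n → ℂ =>
    aeval (fun p : Fin d × Fin n => if (p.1 : ℕ) = 0 then C (w p.2) else X p) F

/-- the ideal `∑_{0<u<𝟏} S·Ann(F)_u` generated by the components `Ann(F)_u`,
`0 < u < 𝟏` (componentwise). -/
def midIdeal (n d : ℕ) (F : MvPolynomial (Fin d × Fin n) ℂ) :
    Ideal (MvPolynomial (Fin d × Fin n) ℂ) :=
  Ideal.span (⋃ u ∈ {u : Fin d → ℕ | 0 < u ∧ u < fun _ => 1},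
    ((ann F ⊓ Scomp n d u : Submodule ℂ (MvPolynomial (Fin d × Fin n) ℂ)) :
      Set (MvPolynomial (Fin d × Fin n) ℂ)))

/-- `F` is a *sharp* tensor:
(1) `Ann(F)` has exactly `n-1` minimal generators of multidegree `𝟏`;
(2) `dim (S/Ann F)_u = n` for all `0 < u < 𝟏`;
(3) `dim (S/(Ann(F)_{e_i+e_j}))_{s e_i + e_j} = n` for all `i ≠ j`, `1 ≤ s ≤ d-1`. -/
def Sharp (n d : ℕ) (F : MvPolynomial (Fin d × Fin n) ℂ) : Prop :=
  (finrank ℂ (ann F ⊓ Scomp n d fun _ => 1 :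
        Submodule ℂ (MvPolynomial (Fin d × Fin n) ℂ)) -
      finrank ℂ (restrictScalars ℂ (midIdeal n d F) ⊓ Scomp n d fun _ => 1 :
        Submodule ℂ (MvPolynomial (Fin d × Fin n) ℂ)) = n - 1) ∧
  (∀ u : Fin d → ℕ, 0 < u → u < (fun _ => 1) →
    finrank ℂ (Scomp n d u ⧸ Submodule.comap (Scomp n d u).subtype (ann F)) = n) ∧
  (∀ i j : Fin d, i ≠ j → ∀ s : ℕ, 1 ≤ s → s ≤ d - 1 →
    finrank ℂ (Scomp n d (Pi.single i s + Pi.single j 1) ⧸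
      Submodule.comap (Scomp n d (Pi.single i s + Pi.single j 1)).subtype
        (restrictScalars ℂ (Ideal.span
          ((ann F ⊓ Scomp n d (Pi.single i 1 + Pi.single j 1) :
            Submodule ℂ (MvPolynomial (Fin d × Fin n) ℂ)) :
            Set (MvPolynomial (Fin d × Fin n) ℂ))))) = n)

-- generator lemma
lemma gen_mem (n d : ℕ) {i k : Fin d} {j l : Fin n} (hik : i ≠ k) (hjl : j ≠ l) :
    (X (i,j) * X (k,l) - X (i,l) * X (k,j) : MvPolynomial (Fin d × Fin n) ℂ) ∈ IR n d := by
  rcases hik.lt_or_gt with h | h <;> rcases hjl.lt_or_gt with h' | h'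
  · exact Ideal.subset_span ⟨i, k, j, l, h, h', rfl⟩
  · have hm : (X (i,l) * X (k,j) - X (i,j) * X (k,l) : MvPolynomial (Fin d × Fin n) ℂ) ∈ IR n d :=
      Ideal.subset_span ⟨i, k, l, j, h, h', rfl⟩
    have h2 : (X (i,j) * X (k,l) - X (i,l) * X (k,j) : MvPolynomial (Fin d × Fin n) ℂ)
        = -(X (i,l) * X (k,j) - X (i,j) * X (k,l)) := by ring
    rw [h2]; exact neg_mem hm
  · have hm : (X (k,j) * X (i,l) - X (k,l) * X (i,j) : MvPolynomial (Fin d × Fin n) ℂ) ∈ IR n d :=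
      Ideal.subset_span ⟨k, i, j, l, h, h', rfl⟩
    have h2 : (X (i,j) * X (k,l) - X (i,l) * X (k,j) : MvPolynomial (Fin d × Fin n) ℂ)
        = -(X (k,j) * X (i,l) - X (k,l) * X (i,j)) := by ring
    rw [h2]; exact neg_mem hm
  · have hm : (X (k,l) * X (i,j) - X (k,j) * X (i,l) : MvPolynomial (Fin d × Fin n) ℂ) ∈ IR n d :=
      Ideal.subset_span ⟨k, i, l, j, h, h', rfl⟩
    have h2 : (X (i,j) * X (k,l) - X (i,l) * X (k,j) : MvPolynomial (Fin d × Fin n) ℂ)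
        = X (k,l) * X (i,j) - X (k,j) * X (i,l) := by ring
    rw [h2]; exact hm

lemma single_row_sum (n d : ℕ) (p₀ : Fin d × Fin n) (i' : Fin d) :
    ∑ j', (Finsupp.single p₀ 1 : (Fin d × Fin n) →₀ ℕ) (i', j')
      = if p₀.1 = i' then 1 else 0 := by
  obtain ⟨i0, j0⟩ := p₀
  simp only [Finsupp.single_apply, Prod.mk.injEq]
  by_cases h : i0 = i' <;> simp [h]

lemma single_col_sum (n d : ℕ) (p₀ : Fin d × Fin n) (j' : Fin n) :
    ∑ i', (Finsupp.single p₀ 1 : (Fin d × Fin n) →₀ ℕ) (i', j')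
      = if p₀.2 = j' then 1 else 0 := by
  obtain ⟨i0, j0⟩ := p₀
  simp only [Finsupp.single_apply, Prod.mk.injEq]
  by_cases h : j0 = j' <;> simp [h]

lemma key (n d : ℕ) : ∀ (N : ℕ) (m m' : (Fin d × Fin n) →₀ ℕ),
    (∀ i, ∑ j, m (i, j) = ∑ j, m' (i, j)) →
    (∀ j, ∑ i, m (i, j) = ∑ i, m' (i, j)) →
    (∑ p : Fin d × Fin n, ((m p - m' p) + (m' p - m p))) ≤ N →
    (monomial m 1 - monomial m' 1 : MvPolynomial (Fin d × Fin n) ℂ) ∈ IR n d := by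
  intro N
  induction N with
  | zero =>
    intro m m' _ _ hN
    have hmm : m = m' := by
      ext p
      have h0 : ∑ p : Fin d × Fin n, ((m p - m' p) + (m' p - m p)) = 0 := Nat.le_zero.mp hN
      have := (Finset.sum_eq_zero_iff).mp h0 p (Finset.mem_univ p)
      omega
    rw [hmm, sub_self]
    exact zero_mem _
  | succ N ih =>
    intro m m' hrow hcol hN
    by_cases hmm : m = m'
    · rw [hmm, sub_self]; exact zero_mem _
    -- find (i,j) with m' (i,j) < m (i,j)
    have hex : ∃ p : Fin d × Fin n, m' p < m p := by
      by_contra hc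
      push_neg at hc
      have hsum : ∑ p : Fin d × Fin n, m p = ∑ p : Fin d × Fin n, m' p := by
        rw [Fintype.sum_prod_type, Fintype.sum_prod_type]
        exact Finset.sum_congr rfl fun i _ => hrow i
      apply hmm
      ext p
      by_contra hne
      have hlt : m p < m' p := lt_of_le_of_ne (hc p) hne
      have := Finset.sum_lt_sum (fun q _ => hc q) ⟨p, Finset.mem_univ p, hlt⟩
      omega
    obtain ⟨⟨i, j⟩, hgt⟩ := hex
    have hexl : ∃ l, m (i, l) < m' (i, l) := by
      by_contra hc
      push_neg at hc
      have := Finset.sum_lt_sum (fun l _ => hc l) ⟨j, Finset.mem_univ j, hgt⟩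
      have h2 := hrow i
      omega
    obtain ⟨l, hl⟩ := hexl
    have hjl : j ≠ l := by rintro rfl; omega
    have hexk : ∃ k, m' (k, l) < m (k, l) := by
      by_contra hc
      push_neg at hc
      have := Finset.sum_lt_sum (fun k _ => hc k) ⟨i, Finset.mem_univ i, hl⟩
      have h2 := hcol l
      omega
    obtain ⟨k, hk⟩ := hexk
    have hik : i ≠ k := by rintro rfl; omega
    set a : Fin d × Fin n := (i, j) with ha
    set b : Fin d × Fin n := (k, l) with hb
    set c' : Fin d × Fin n := (i, l) with hc'
    set d' : Fin d × Fin n := (k, j) with hd'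
    have hab : a ≠ b := fun h => hik (congrArg Prod.fst h)
    have hle : (Finsupp.single a 1 + Finsupp.single b 1 : (Fin d × Fin n) →₀ ℕ) ≤ m := by
      rw [Finsupp.le_def]
      intro p
      simp only [Finsupp.add_apply, Finsupp.single_apply]
      rcases eq_or_ne a p with h1 | h1 <;> rcases eq_or_ne b p with h2 | h2
      · exact absurd (h1.trans h2.symm) hab
      · rw [if_pos h1, if_neg h2]; subst h1; omega
      · rw [if_neg h1, if_pos h2]; subst h2; omega
      · rw [if_neg h1, if_neg h2]; omega
    set m₀ : (Fin d × Fin n) →₀ ℕ := m - (Finsupp.single a 1 + Finsupp.single b 1) with hm₀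
    have hm0 : m₀ + (Finsupp.single a 1 + Finsupp.single b 1) = m := tsub_add_cancel_of_le hle
    set m₂ : (Fin d × Fin n) →₀ ℕ := m₀ + (Finsupp.single c' 1 + Finsupp.single d' 1) with hm₂
    have hbal : m₂ + (Finsupp.single a 1 + Finsupp.single b 1)
        = m + (Finsupp.single c' 1 + Finsupp.single d' 1) := by
      rw [hm₂, ← hm0]; abel
    -- pointwise
    have hpt : ∀ p : Fin d × Fin n, m₂ p + ((if a = p then 1 else 0) + (if b = p then 1 else 0))
        = m p + ((if c' = p then 1 else 0) + (if d' = p then 1 else 0)) := by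
      intro p
      have := DFunLike.congr_fun hbal p
      simpa [Finsupp.single_apply] using this
    -- rows
    have hrow2 : ∀ i', ∑ j', m₂ (i', j') = ∑ j', m (i', j') := by
      intro i'
      have h1 := congrArg (fun f : (Fin d × Fin n) →₀ ℕ => ∑ j', f (i', j')) hbal
      simp only [Finsupp.add_apply, Finset.sum_add_distrib] at h1
      rw [single_row_sum, single_row_sum, single_row_sum, single_row_sum] at h1
      simp only [ha, hb, hc', hd'] at h1
      omega
    have hcol2 : ∀ j', ∑ i', m₂ (i', j') = ∑ i', m (i', j') := by
      intro j'
      have h1 := congrArg (fun f : (Fin d × Fin n) →₀ ℕ => ∑ i', f (i', j')) hbal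
      simp only [Finsupp.add_apply, Finset.sum_add_distrib] at h1
      rw [single_col_sum, single_col_sum, single_col_sum, single_col_sum] at h1
      simp only [ha, hb, hc', hd'] at h1
      omega
    -- pointwise values at the 4 special points
    have hne_ac : a ≠ c' := fun h => hjl (congrArg Prod.snd h)
    have hne_ad : a ≠ d' := fun h => hik (congrArg Prod.fst h)
    have hne_bc : b ≠ c' := fun h => hik ((congrArg Prod.fst h).symm)
    have hne_bd : b ≠ d' := fun h => hjl ((congrArg Prod.snd h).symm)
    have hne_cd : c' ≠ d' := fun h => hik (congrArg Prod.fst h)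
    have hva : m₂ a + 1 = m a := by
      have := hpt a
      rw [if_pos rfl, if_neg (fun h => hab h.symm), if_neg (fun h => hne_ac h.symm),
        if_neg (fun h => hne_ad h.symm)] at this
      omega
    have hvb : m₂ b + 1 = m b := by
      have := hpt b
      rw [if_pos rfl, if_neg (fun h => hab h), if_neg (fun h => hne_bc h.symm),
        if_neg (fun h => hne_bd h.symm)] at this
      omega
    have hvc : m₂ c' = m c' + 1 := by
      have := hpt c'
      rw [if_pos rfl, if_neg (fun h => hne_ac h), if_neg (fun h => hne_bc h),
        if_neg (fun h => hne_cd h.symm)] at this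
      omega
    have hvd : m₂ d' = m d' + 1 := by
      have := hpt d'
      rw [if_pos rfl, if_neg (fun h => hne_ad h), if_neg (fun h => hne_bd h),
        if_neg (fun h => hne_cd h)] at this
      omega
    have hvother : ∀ p, p ≠ a → p ≠ b → p ≠ c' → p ≠ d' → m₂ p = m p := by
      intro p h1 h2 h3 h4
      have := hpt p
      rw [if_neg (fun h => h1 h.symm), if_neg (fun h => h2 h.symm), if_neg (fun h => h3 h.symm),
        if_neg (fun h => h4 h.symm)] at this
      omega
    -- distance decreases
    have hdist : (∑ p : Fin d × Fin n, ((m₂ p - m' p) + (m' p - m₂ p))) ≤ N := by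
      set f : Fin d × Fin n → ℕ := fun p => (m p - m' p) + (m' p - m p) with hf
      set f₂ : Fin d × Fin n → ℕ := fun p => (m₂ p - m' p) + (m' p - m₂ p) with hf₂
      set s : Finset (Fin d × Fin n) := {a, b, c', d'} with hs
      have hsub : s ⊆ Finset.univ := Finset.subset_univ s
      have e1 : ∑ p ∈ Finset.univ \ s, f p + ∑ p ∈ s, f p = Finset.univ.sum f :=
        Finset.sum_sdiff hsub
      have e2 : ∑ p ∈ Finset.univ \ s, f₂ p + ∑ p ∈ s, f₂ p = Finset.univ.sum f₂ :=
        Finset.sum_sdiff hsub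
      have hrest : ∑ p ∈ Finset.univ \ s, f₂ p = ∑ p ∈ Finset.univ \ s, f p := by
        apply Finset.sum_congr rfl
        intro p hp
        simp only [Finset.mem_sdiff, hs, Finset.mem_insert, Finset.mem_singleton] at hp
        push_neg at hp
        obtain ⟨-, h1, h2, h3, h4⟩ := hp
        rw [hf, hf₂]
        simp only [hvother p h1 h2 h3 h4]
      have hss : ∑ p ∈ s, f₂ p + 2 ≤ ∑ p ∈ s, f p := by
        have hrw : ∀ g : Fin d × Fin n → ℕ, ∑ p ∈ s, g p = g a + g b + g c' + g d' := by
          intro g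
          rw [hs]
          rw [Finset.sum_insert (by simp [hab, hne_ac, hne_ad]),
            Finset.sum_insert (by simp [hne_bc, hne_bd]),
            Finset.sum_insert (by simp [hne_cd]), Finset.sum_singleton]
          ring
        rw [hrw f, hrw f₂, hf, hf₂]
        simp only []
        omega
      omega
    have hstep : (monomial m 1 - monomial m₂ 1 : MvPolynomial (Fin d × Fin n) ℂ) ∈ IR n d := by
      have hXab : (X a * X b : MvPolynomial (Fin d × Fin n) ℂ)
          = monomial (Finsupp.single a 1 + Finsupp.single b 1) 1 := by
        rw [← pow_one (X a : MvPolynomial (Fin d × Fin n) ℂ), ← pow_one (X b : MvPolynomial (Fin d × Fin n) ℂ),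
          X_pow_eq_monomial, X_pow_eq_monomial, monomial_mul, one_mul]
      have hXcd : (X c' * X d' : MvPolynomial (Fin d × Fin n) ℂ)
          = monomial (Finsupp.single c' 1 + Finsupp.single d' 1) 1 := by
        rw [← pow_one (X c' : MvPolynomial (Fin d × Fin n) ℂ), ← pow_one (X d' : MvPolynomial (Fin d × Fin n) ℂ),
          X_pow_eq_monomial, X_pow_eq_monomial, monomial_mul, one_mul]
      have heq : (monomial m 1 - monomial m₂ 1 : MvPolynomial (Fin d × Fin n) ℂ)
          = monomial m₀ 1 * (X a * X b - X c' * X d') := by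
        rw [mul_sub, hXab, hXcd, monomial_mul, monomial_mul, one_mul, hm0, ← hm₂]
      rw [heq]
      exact Ideal.mul_mem_left _ _ (gen_mem n d hik hjl)
    have hrec : (monomial m₂ 1 - monomial m' 1 : MvPolynomial (Fin d × Fin n) ℂ) ∈ IR n d :=
      ih m₂ m' (fun i' => (hrow2 i').trans (hrow i')) (fun j' => (hcol2 j').trans (hcol j')) hdist
    have := add_mem hstep hrec
    simpa using this

lemma piAlg_eq_rename (n d : ℕ) : piAlg n d = rename (Prod.snd : Fin d × Fin n → Fin n) :=
  algHom_ext fun p => by simp [piAlg]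

lemma row_of_mem {n d : ℕ} {u : Fin d → ℕ} {x : MvPolynomial (Fin d × Fin n) ℂ}
    (hx : x ∈ Scomp n d u) {m : (Fin d × Fin n) →₀ ℕ} (hm : coeff m x ≠ 0) (i : Fin d) :
    ∑ j, m (i, j) = u i := by
  have hwh : x.IsWeightedHomogeneous (fun p : Fin d × Fin n => Pi.single p.1 1) u :=
    (mem_weightedHomogeneousSubmodule ℂ _ u x).mp hx
  have h := hwh hm
  have h2 := congrFun h i
  rw [Finsupp.weight_apply] at h2
  rw [Finsupp.sum_fintype] at h2
  · rw [← h2]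
    simp only [Finset.sum_apply, Pi.smul_apply, Pi.single_apply, smul_eq_mul]
    rw [Fintype.sum_prod_type]
    simp
  · intro p; simp

lemma mapDomain_snd {n d : ℕ} (m : (Fin d × Fin n) →₀ ℕ) (j : Fin n) :
    Finsupp.mapDomain Prod.snd m j = ∑ i, m (i, j) := by
  rw [Finsupp.mapDomain, Finsupp.sum_apply, Finsupp.sum_fintype]
  · simp only [Finsupp.single_apply]
    rw [Fintype.sum_prod_type]
    simp
  · intro p; simp

lemma IR_le_ker (n d : ℕ) {x : MvPolynomial (Fin d × Fin n) ℂ} (hx : x ∈ IR n d) :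
    piL n d x = 0 := by
  have hle : IR n d ≤ RingHom.ker (piAlg n d).toRingHom := by
    rw [IR, Ideal.span_le]
    rintro q ⟨i, k, j, l, -, -, rfl⟩
    simp only [SetLike.mem_coe, RingHom.mem_ker, map_sub, map_mul, AlgHom.toRingHom_eq_coe,
      RingHom.coe_coe]
    simp [piAlg]
    ring
  exact hle hx


/-- first part of Lemma 3.5: for every `u ∈ ℤ^d_{≥0}`,
`ker (π|_{S_u}) = (I_R)_u`. -/
theorem stmt_1 (n d : ℕ) (hn : 0 < n) (hd : 0 < d) (u : Fin d → ℕ)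
    (x : MvPolynomial (Fin d × Fin n) ℂ) (hx : x ∈ Scomp n d u) :
    piL n d x = 0 ↔ x ∈ IR n d := by
  classical
  constructor
  · intro h
    rw [← Ideal.Quotient.eq_zero_iff_mem]
    set q := Ideal.Quotient.mk (IR n d) with hqdef
    have hrowm : ∀ m ∈ x.support, ∀ i : Fin d, ∑ j, m (i, j) = u i := fun m hm i =>
      row_of_mem hx (mem_support_iff.mp hm) i
    have hqeq : ∀ m ∈ x.support, ∀ m' ∈ x.support,
        Finsupp.mapDomain Prod.snd m = Finsupp.mapDomain Prod.snd m' →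
        q (monomial m 1) = q (monomial m' 1) := by
      intro m hm m' hm' hmd
      refine Ideal.Quotient.eq.mpr (key n d _ m m'
        (fun i => (hrowm m hm i).trans (hrowm m' hm' i).symm)
        (fun j => by rw [← mapDomain_snd, ← mapDomain_snd, hmd]) le_rfl)
    have hpi : piL n d x = ∑ m ∈ x.support, monomial (Finsupp.mapDomain Prod.snd m) (coeff m x) := by
      conv_lhs => rw [x.as_sum]
      rw [map_sum]
      refine Finset.sum_congr rfl fun m _ => ?_
      show piAlg n d (monomial m (coeff m x)) = _
      rw [piAlg_eq_rename, rename_monomial]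
    have hco : ∀ γ : Fin n →₀ ℕ,
        ∑ m ∈ x.support.filter (fun m => Finsupp.mapDomain Prod.snd m = γ), coeff m x = 0 := by
      intro γ
      have hz : coeff γ (piL n d x) = 0 := by rw [h]; simp
      rw [hpi, coeff_sum] at hz
      simp only [coeff_monomial] at hz
      rwa [Finset.sum_filter]
    have step1 : q x = ∑ m ∈ x.support, q (C (coeff m x)) * q (monomial m 1) := by
      conv_lhs => rw [x.as_sum]
      rw [map_sum]
      refine Finset.sum_congr rfl fun m _ => ?_
      rw [← map_mul, C_mul_monomial, mul_one]
    rw [step1,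
      ← Finset.sum_fiberwise_of_maps_to (g := fun m => Finsupp.mapDomain Prod.snd m)
        (t := x.support.image (fun m => Finsupp.mapDomain Prod.snd m))
        (fun m hm => Finset.mem_image_of_mem _ hm)]
    apply Finset.sum_eq_zero
    intro γ hγ
    obtain ⟨m₀, hm₀, hγ0⟩ := Finset.mem_image.mp hγ
    have hc : ∀ m ∈ x.support.filter (fun m => Finsupp.mapDomain Prod.snd m = γ),
        q (C (coeff m x)) * q (monomial m 1) = q (C (coeff m x)) * q (monomial m₀ 1) := by
      intro m hm
      rw [Finset.mem_filter] at hm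
      rw [hqeq m hm.1 m₀ hm₀ (hm.2.trans hγ0.symm)]
    rw [Finset.sum_congr rfl hc, ← Finset.sum_mul, ← map_sum, ← map_sum, hco γ]
    simp
  · exact fun hx => IR_le_ker n d hx


end BorderComon
end
end

section
/- Let n and d be positive integers and let F ∈ (ℂ^n)^{⊗d} be a symmetric tensor with corresponding degree-d polynomial p_F. Then π(Ann(F)_𝟏) = Ann(p_F)_d: the image under π of the multidegree-(1,…,1) component of the apolar ideal of F equals the degree-d component of the apolar ideal of p_F. -/
/-!
Common setup, following the paper "On the abundance of minimal border rank symmetric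
tensors verifying Comon's conjecture".

* `S = ℂ[α_{i,j} : 1 ≤ i ≤ d, 1 ≤ j ≤ n]` is modeled as `MvPolynomial (Fin d × Fin n) ℂ`,
  with the `ℤ^d`-grading in which `deg α_{i,j} = e_i`; `Scomp n d u` is the
  multidegree-`u` component (`u : Fin d → ℕ`).
* `V = ℂ[β_1,…,β_n]` is modeled as `MvPolynomial (Fin n) ℂ` with its standard grading;
  `Vcomp n N` is the degree-`N` component.
* The graded duals `T` and `P` are modeled by the same polynomial rings, with `S`
  (resp. `V`) acting by differentiation (`apolar`); `ann F` is the apolar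
  (annihilator) ideal of `F`.
* A tensor `F ∈ (ℂ^n)^{⊗d}` is an element of the multidegree-`(1,…,1)` component
  `Scomp n d (fun _ => 1)` (a multilinear form in the `x_{i,j}`).
-/

open MvPolynomial Submodule Module

noncomputable section

namespace BorderComon

section Lemma36

open Finset

variable {n d : ℕ}

/-- multilinear exponents: each row has total degree 1. -/
def ML (n d : ℕ) (a : (Fin d × Fin n) →₀ ℕ) : Prop :=
  ∀ i : Fin d, ∑ j : Fin n, a (i, j) = 1

/-- the multilinear exponent associated to `g : Fin d → Fin n`. -/
def eg (g : Fin d → Fin n) : (Fin d × Fin n) →₀ ℕ :=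
  ∑ i, Finsupp.single (i, g i) 1

/-- the count vector of `g`. -/
def cnt (g : Fin d → Fin n) : Fin n →₀ ℕ :=
  ∑ i, Finsupp.single (g i) 1

lemma eg_apply (g : Fin d → Fin n) (i : Fin d) (j : Fin n) :
    eg g (i, j) = if g i = j then 1 else 0 := by
  classical
  rw [eg, Finset.sum_apply']
  rw [Finset.sum_eq_single i (fun i' _ hne => by
    rw [Finsupp.single_apply, if_neg (by simp [Prod.ext_iff, hne])])
    (fun h => absurd (Finset.mem_univ i) h)]
  rw [Finsupp.single_apply]
  by_cases h : g i = j <;> simp [Prod.ext_iff, h]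

lemma ML_eg (g : Fin d → Fin n) : ML n d (eg g) := by
  intro i
  simp only [eg_apply]
  simp

lemma ML_iff {a : (Fin d × Fin n) →₀ ℕ} : ML n d a ↔ ∃ g, eg g = a := by
  constructor
  · intro h
    have hex : ∀ i : Fin d, ∃ j, a (i, j) ≠ 0 := by
      intro i
      obtain ⟨j, _, hj⟩ := Finset.exists_ne_zero_of_sum_ne_zero (by rw [h i]; norm_num :
        ∑ j : Fin n, a (i, j) ≠ 0)
      exact ⟨j, hj⟩
    choose g hg using hex
    refine ⟨g, ?_⟩
    ext ⟨i, j⟩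
    rw [eg_apply]
    have h1 : a (i, g i) = 1 := by
      have hle : a (i, g i) ≤ 1 := by
        rw [← h i]
        exact Finset.single_le_sum (f := fun j => a (i, j)) (fun _ _ => Nat.zero_le _)
          (Finset.mem_univ _)
      have := hg i
      omega
    by_cases hj : g i = j
    · subst hj; simp [h1]
    · rw [if_neg hj]
      by_contra hne
      have h2 : a (i, j) + a (i, g i) ≤ ∑ j : Fin n, a (i, j) := by
        have := Finset.sum_le_sum_of_subset (f := fun j => a (i, j))
          (Finset.subset_univ {j, g i})
        rwa [Finset.sum_pair (fun hc => hj (hc.symm))] at this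
      rw [h i] at h2
      omega
  · rintro ⟨g, rfl⟩; exact ML_eg g

lemma eg_injective : Function.Injective (eg (n := n) (d := d)) := by
  intro g g' hgg
  funext i
  have := congrArg (fun v : (Fin d × Fin n) →₀ ℕ => v (i, g i)) hgg
  simp only [eg_apply] at this
  by_cases h : g' i = g i
  · exact h.symm
  · simp [h] at this

lemma cnt_apply (g : Fin d → Fin n) (j : Fin n) :
    cnt g j = (Finset.univ.filter fun i => g i = j).card := by
  classical
  rw [cnt, Finset.sum_apply', Finset.card_filter]
  refine Finset.sum_congr rfl fun i _ => ?_
  rw [Finsupp.single_apply]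

lemma mapDomain_snd_eg (g : Fin d → Fin n) :
    Finsupp.mapDomain Prod.snd (eg g) = cnt g := by
  rw [eg, cnt,
    show Finsupp.mapDomain (α := Fin d × Fin n) (M := ℕ) Prod.snd
      = ⇑(Finsupp.mapDomain.addMonoidHom Prod.snd) from rfl, map_sum]
  refine Finset.sum_congr rfl fun i _ => ?_
  rw [Finsupp.mapDomain.addMonoidHom_apply, Finsupp.mapDomain_single]

lemma cnt_comp_perm (g : Fin d → Fin n) (τ : Equiv.Perm (Fin d)) :
    cnt (g ∘ τ) = cnt g := by
  rw [cnt, cnt]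
  exact Equiv.sum_comp τ (fun i => Finsupp.single (g i) 1)

lemma sum_cnt (g : Fin d → Fin n) : ∑ j, cnt g j = d := by
  classical
  simp only [cnt_apply]
  rw [← Finset.card_eq_sum_card_fiberwise (f := g) (fun i _ => Finset.mem_univ (g i))]
  simp
lemma exists_cnt : ∀ (m : ℕ) (δ : Fin n →₀ ℕ), (∑ j, δ j = m) →
    ∃ g : Fin m → Fin n, cnt g = δ := by
  intro m
  induction m with
  | zero =>
    intro δ hδ
    refine ⟨Fin.elim0, ?_⟩
    have hz : ∀ j, δ j = 0 := fun j => by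
      have : δ j ≤ ∑ j, δ j := Finset.single_le_sum (fun _ _ => Nat.zero_le _) (Finset.mem_univ _)
      omega
    have : δ = 0 := by ext j; simp [hz j]
    rw [this, cnt]
    simp
  | succ m ih =>
    intro δ hδ
    have hex : ∃ j0, δ j0 ≠ 0 := by
      by_contra hc
      push_neg at hc
      simp [hc] at hδ
    obtain ⟨j0, hj0⟩ := hex
    set δ' : Fin n →₀ ℕ := δ - Finsupp.single j0 1 with hδ'
    have hptw : ∀ j, δ' j = δ j - (if j0 = j then 1 else 0) := by
      intro j
      rw [hδ', Finsupp.tsub_apply, Finsupp.single_apply]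
    have hle : ∀ j, (Finsupp.single j0 1 : Fin n →₀ ℕ) j ≤ δ j := by
      intro j
      rw [Finsupp.single_apply]
      by_cases h : j0 = j
      · subst h
        rw [if_pos rfl]
        have := Nat.one_le_iff_ne_zero.mpr hj0
        omega
      · simp [h]
    have hsum : ∑ j, δ' j = m := by
      have h1 : ∑ j, (Finsupp.single j0 1 : Fin n →₀ ℕ) j = 1 := by
        simp [Finsupp.single_apply, Finset.sum_ite_eq]
      have h2 : ∑ j, δ' j = (∑ j, δ j) - ∑ j, (Finsupp.single j0 1 : Fin n →₀ ℕ) j := by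
        simp only [hδ', Finsupp.tsub_apply]
        exact Finset.sum_tsub_distrib _ (fun j _ => hle j)
      rw [h2, h1]
      omega
    obtain ⟨g', hg'⟩ := ih δ' hsum
    refine ⟨Fin.snoc g' j0, ?_⟩
    have : cnt (Fin.snoc g' j0 : Fin (m+1) → Fin n) = cnt g' + Finsupp.single j0 1 := by
      rw [cnt, cnt, Fin.sum_univ_castSucc]
      simp
    rw [this, hg']
    ext j
    rw [Finsupp.add_apply, hptw j, Finsupp.single_apply]
    by_cases h : j0 = j
    · subst h
      have h1 : 1 ≤ δ j0 := Nat.one_le_iff_ne_zero.mpr hj0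
      rw [if_pos rfl]
      omega
    · simp [h]

lemma exists_perm_comp {g h : Fin d → Fin n} (hc : cnt g = cnt h) :
    ∃ τ : Equiv.Perm (Fin d), g = h ∘ τ := by
  classical
  have hcard : ∀ j, Fintype.card {i // g i = j} = Fintype.card {i // h i = j} := by
    intro j
    rw [Fintype.card_subtype, Fintype.card_subtype, ← cnt_apply, ← cnt_apply, hc]
  let e : ∀ j, {i // g i = j} ≃ {i // h i = j} := fun j => Fintype.equivOfCardEq (hcard j)
  refine ⟨((Equiv.sigmaFiberEquiv g).symm.trans (Equiv.sigmaCongrRight e)).trans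
    (Equiv.sigmaFiberEquiv h), ?_⟩
  funext i
  simp only [Function.comp_apply, Equiv.trans_apply, Equiv.sigmaFiberEquiv,
    Equiv.sigmaCongrRight, Equiv.coe_fn_mk, Equiv.coe_fn_symm_mk]
  exact ((e (g i)) ⟨i, rfl⟩).prop.symm

lemma card_cnt_mul (g : Fin d → Fin n) :
    (Finset.univ.filter fun h : Fin d → Fin n => cnt h = cnt g).card *
      ∏ j, Nat.factorial (cnt g j) = Nat.factorial d := by
  classical
  have hstab : ∀ h : Fin d → Fin n, cnt h = cnt g →
      (Finset.univ.filter fun τ : Equiv.Perm (Fin d) => g ∘ τ = h).card =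
      ∏ j, Nat.factorial (cnt g j) := by
    intro h hch
    obtain ⟨τ0, hτ0⟩ := exists_perm_comp hch.symm
    -- h = g ∘ τ0
    have hbij : (Finset.univ.filter fun τ : Equiv.Perm (Fin d) => g ∘ τ = h).card =
        (Finset.univ.filter fun τ : Equiv.Perm (Fin d) => g ∘ τ = g).card := by
      apply Finset.card_bij (fun τ _ => τ * τ0)
      · intro τ hτ
        simp only [Finset.mem_filter, Finset.mem_univ, true_and] at hτ ⊢
        funext x
        have h1 : g (τ (τ0 x)) = h (τ0 x) := congrFun hτ (τ0 x)
        have h2 : h (τ0 x) = g x := (congrFun hτ0 x).symm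
        simpa using h1.trans h2
      · intro τ1 _ τ2 _ hteq
        exact mul_right_cancel hteq
      · intro σ hσ
        simp only [Finset.mem_filter, Finset.mem_univ, true_and] at hσ
        refine ⟨σ * τ0⁻¹, Finset.mem_filter.mpr ⟨Finset.mem_univ _, ?_⟩, by group⟩
        funext x
        have h1 : g (σ (τ0⁻¹ x)) = g (τ0⁻¹ x) := congrFun hσ (τ0⁻¹ x)
        have h2 : g (τ0⁻¹ x) = h (τ0 (τ0⁻¹ x)) := congrFun hτ0 (τ0⁻¹ x)
        rw [Equiv.Perm.inv_def, Equiv.apply_symm_apply] at h2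
        simpa using h1.trans h2
    rw [hbij]
    have := DomMulAct.stabilizer_card g
    rw [Fintype.card_subtype] at this
    rw [this]
    refine Finset.prod_congr rfl fun j _ => ?_
    rw [Fintype.card_subtype, ← cnt_apply]
  have hmain : Fintype.card (Equiv.Perm (Fin d)) =
      ∑ h ∈ (Finset.univ.filter fun h : Fin d → Fin n => cnt h = cnt g),
        (Finset.univ.filter fun τ : Equiv.Perm (Fin d) => g ∘ τ = h).card := by
    rw [← Finset.card_univ]
    apply Finset.card_eq_sum_card_fiberwise (f := fun τ : Equiv.Perm (Fin d) => g ∘ τ)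
    intro τ _
    simp only [Finset.mem_filter, Finset.mem_univ, true_and]
    exact Finset.mem_coe.mpr (Finset.mem_filter.mpr ⟨Finset.mem_univ _, cnt_comp_perm g τ⟩)
  rw [Finset.sum_congr rfl (fun h hh => hstab h (Finset.mem_filter.mp hh).2),
    Finset.sum_const, smul_eq_mul] at hmain
  rw [← hmain, Fintype.card_perm, Fintype.card_fin]

lemma weight_row_apply (a : (Fin d × Fin n) →₀ ℕ) (i : Fin d) :
    Finsupp.weight (fun p : Fin d × Fin n => (Pi.single p.1 1 : Fin d → ℕ)) a i = ∑ j, a (i, j) := by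
  classical
  rw [Finsupp.weight_apply, Finsupp.sum_fintype _ _ (fun p => by simp)]
  rw [Finset.sum_apply, Fintype.sum_prod_type]
  have key : ∀ i' : Fin d, (∑ j : Fin n, (a (i', j) • (Pi.single i' 1 : Fin d → ℕ)) i)
      = if i = i' then ∑ j, a (i', j) else 0 := by
    intro i'
    simp only [Pi.smul_apply, Pi.single_apply, smul_eq_mul]
    split_ifs with h
    · simp
    · simp
  rw [Finset.sum_congr rfl fun i' _ => key i', Finset.sum_ite_eq]
  simp

lemma mem_Scomp_iff {F : MvPolynomial (Fin d × Fin n) ℂ} {u : Fin d → ℕ} :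
    F ∈ Scomp n d u ↔ ∀ a ∈ F.support, ∀ i : Fin d, ∑ j, a (i, j) = u i := by
  rw [Scomp, mem_weightedHomogeneousSubmodule]
  constructor
  · intro h a ha i
    rw [← weight_row_apply]
    rw [h (MvPolynomial.mem_support_iff.mp ha)]
  · intro h a ha
    funext i
    rw [weight_row_apply]
    exact h a (MvPolynomial.mem_support_iff.mpr ha) i

lemma mem_Scomp_one_iff {F : MvPolynomial (Fin d × Fin n) ℂ} :
    (F ∈ Scomp n d fun _ => 1) ↔ ∀ a ∈ F.support, ML n d a :=
  mem_Scomp_iff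

lemma weight_one_apply (γ : Fin n →₀ ℕ) :
    Finsupp.weight (1 : Fin n → ℕ) γ = ∑ j, γ j := by
  classical
  rw [Finsupp.weight_apply, Finsupp.sum_fintype _ _ (fun p => by simp)]
  simp

lemma mem_Vcomp_iff {q : MvPolynomial (Fin n) ℂ} {N : ℕ} :
    q ∈ Vcomp n N ↔ ∀ γ ∈ q.support, ∑ j, γ j = N := by
  rw [Vcomp, mem_homogeneousSubmodule]
  unfold MvPolynomial.IsHomogeneous
  constructor
  · intro h γ hγ
    rw [← weight_one_apply, h (MvPolynomial.mem_support_iff.mp hγ)]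
  · intro h γ hγ
    rw [weight_one_apply]
    exact h γ (MvPolynomial.mem_support_iff.mpr hγ)

lemma apolar_sum {σ : Type*} (F ψ : MvPolynomial σ ℂ) :
    apolar F ψ = (AddMonoidAlgebra.coeff ψ).sum fun a c => c • diffMon a F := by
  rfl

lemma diffMon_eq {σ : Type*} [DecidableEq σ] (F : MvPolynomial σ ℂ) (a : σ →₀ ℕ) (Γa : ℕ)
    (h1 : ∀ b ∈ F.support, b ≠ a → ∏ p ∈ a.support, (b p).descFactorial (a p) = 0)
    (h2 : ∏ p ∈ a.support, (a p).descFactorial (a p) = Γa) :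
    diffMon a F = MvPolynomial.C (F.coeff a * Γa) := by
  rw [diffMon]
  rw [Finset.sum_eq_single a (fun b hb hne => by
      rw [show (∏ i ∈ a.support, ((b i).descFactorial (a i) : ℂ))
          = ((∏ i ∈ a.support, (b i).descFactorial (a i) : ℕ) : ℂ) by push_cast; ring]
      rw [h1 b hb hne]
      simp)
    (fun ha => by
      rw [MvPolynomial.notMem_support_iff.mp ha]
      simp)]
  rw [show (∏ i ∈ a.support, ((a i).descFactorial (a i) : ℂ))
      = ((∏ i ∈ a.support, (a i).descFactorial (a i) : ℕ) : ℂ) by push_cast; ring]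
  rw [h2, tsub_self, MvPolynomial.smul_eq_C_mul]
  rw [show ((MvPolynomial.monomial (0 : σ →₀ ℕ)) (1 : ℂ)) = MvPolynomial.C (1 : ℂ) by
    rw [MvPolynomial.monomial_zero']]
  rw [map_one, mul_one]

lemma prod_desc_ML {a b : (Fin d × Fin n) →₀ ℕ} (ha : ML n d a) (hb : ML n d b) (hne : b ≠ a) :
    ∏ p ∈ a.support, (b p).descFactorial (a p) = 0 := by
  classical
  by_contra hprod
  apply hne
  obtain ⟨g, rfl⟩ := ML_iff.mp ha
  obtain ⟨h, rfl⟩ := ML_iff.mp hb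
  have hgh : h = g := by
    funext i
    have hmem : ((i, g i) : Fin d × Fin n) ∈ (eg g).support := by
      rw [Finsupp.mem_support_iff, eg_apply, if_pos rfl]
      norm_num
    have hfac := Finset.prod_ne_zero_iff.mp hprod _ hmem
    rw [eg_apply, eg_apply, if_pos rfl, Nat.descFactorial_one] at hfac
    by_contra hcon
    rw [if_neg hcon] at hfac
    exact hfac rfl
  rw [hgh]

lemma prod_desc_ML_self {a : (Fin d × Fin n) →₀ ℕ} (ha : ML n d a) :
    ∏ p ∈ a.support, (a p).descFactorial (a p) = 1 := by
  apply Finset.prod_eq_one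
  intro p hp
  obtain ⟨g, rfl⟩ := ML_iff.mp ha
  obtain ⟨i, j⟩ := p
  rw [Finsupp.mem_support_iff, eg_apply] at hp
  rw [eg_apply]
  by_cases h : g i = j
  · rw [if_pos h]
    rfl
  · rw [if_neg h] at hp; exact absurd rfl hp

/-- the product of factorials of a multidegree. -/
def Gammafac (γ : Fin n →₀ ℕ) : ℕ := ∏ j ∈ γ.support, Nat.factorial (γ j)

lemma Gammafac_eq_univ (γ : Fin n →₀ ℕ) : Gammafac γ = ∏ j, Nat.factorial (γ j) := by
  rw [Gammafac]
  exact Finset.prod_subset (Finset.subset_univ _) fun j _ hj => by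
    rw [Finsupp.notMem_support_iff.mp hj]
    rfl

lemma Gammafac_ne_zero (γ : Fin n →₀ ℕ) : Gammafac γ ≠ 0 := by
  rw [Gammafac]
  exact Finset.prod_ne_zero_iff.mpr fun j _ => Nat.factorial_ne_zero _

lemma prod_desc_deg {γ δ : Fin n →₀ ℕ} (hγ : ∑ j, γ j = d) (hδ : ∑ j, δ j = d) (hne : δ ≠ γ) :
    ∏ j ∈ γ.support, (δ j).descFactorial (γ j) = 0 := by
  by_contra hprod
  apply hne
  have hle : ∀ j, γ j ≤ δ j := by
    intro j
    by_cases hj : j ∈ γ.support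
    · have hfac := Finset.prod_ne_zero_iff.mp hprod j hj
      by_contra hcon
      exact hfac (Nat.descFactorial_eq_zero_iff_lt.mpr (by omega))
    · rw [Finsupp.notMem_support_iff.mp hj]
      exact Nat.zero_le _
  ext j
  by_contra hne2
  have hlt : γ j < δ j := lt_of_le_of_ne (hle j) (Ne.symm hne2)
  have : ∑ j, γ j < ∑ j, δ j :=
    Finset.sum_lt_sum (fun j _ => hle j) ⟨j, Finset.mem_univ j, hlt⟩
  omega

lemma prod_desc_deg_self (γ : Fin n →₀ ℕ) :
    ∏ j ∈ γ.support, (γ j).descFactorial (γ j) = Gammafac γ :=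
  Finset.prod_congr rfl fun j _ => Nat.descFactorial_self _

lemma apolar_tensor_eq {F ψ : MvPolynomial (Fin d × Fin n) ℂ}
    (hF : ∀ b ∈ F.support, ML n d b) (hψ : ∀ a ∈ ψ.support, ML n d a) :
    apolar F ψ = MvPolynomial.C (∑ a ∈ ψ.support, MvPolynomial.coeff a ψ * MvPolynomial.coeff a F) := by
  classical
  rw [apolar_sum]
  rw [Finsupp.sum_congr (g2 := fun a c => MvPolynomial.C (c * MvPolynomial.coeff a F))
    (fun a ha => by
      rw [diffMon_eq F a 1 (fun b hb hne => prod_desc_ML (hψ a ha) (hF b hb) hne)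
        (prod_desc_ML_self (hψ a ha))]
      rw [MvPolynomial.smul_eq_C_mul, ← MvPolynomial.C_mul, Nat.cast_one, mul_one])]
  rw [map_sum]
  rfl

lemma apolar_poly_eq {p q : MvPolynomial (Fin n) ℂ}
    (hp : ∀ δ ∈ p.support, ∑ j, δ j = d) (hq : ∀ γ ∈ q.support, ∑ j, γ j = d) :
    apolar p q = MvPolynomial.C (∑ γ ∈ q.support,
      MvPolynomial.coeff γ q * (MvPolynomial.coeff γ p * Gammafac γ)) := by
  classical
  rw [apolar_sum]
  rw [Finsupp.sum_congr (g2 := fun γ c => MvPolynomial.C (c * (MvPolynomial.coeff γ p * Gammafac γ)))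
    (fun γ hγ => by
      rw [diffMon_eq p γ (Gammafac γ)
        (fun δ hδ hne => prod_desc_deg (hq γ hγ) (hp δ hδ) hne)
        (prod_desc_deg_self γ)]
      rw [MvPolynomial.smul_eq_C_mul, ← MvPolynomial.C_mul])]
  rw [map_sum]
  rfl

lemma mem_ann_tensor {F ψ : MvPolynomial (Fin d × Fin n) ℂ}
    (hF : ∀ b ∈ F.support, ML n d b) (hψ : ∀ a ∈ ψ.support, ML n d a) :
    ψ ∈ ann F ↔ ∑ a ∈ ψ.support, MvPolynomial.coeff a ψ * MvPolynomial.coeff a F = 0 := by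
  rw [ann, LinearMap.mem_ker, apolar_tensor_eq hF hψ, MvPolynomial.C_eq_zero]

lemma mem_ann_poly {p q : MvPolynomial (Fin n) ℂ}
    (hp : ∀ δ ∈ p.support, ∑ j, δ j = d) (hq : ∀ γ ∈ q.support, ∑ j, γ j = d) :
    q ∈ ann p ↔ ∑ γ ∈ q.support,
      MvPolynomial.coeff γ q * (MvPolynomial.coeff γ p * Gammafac γ) = 0 := by
  rw [ann, LinearMap.mem_ker, apolar_poly_eq hp hq, MvPolynomial.C_eq_zero]

lemma coeff_mapDomain_apply {α β : Type*} [DecidableEq β] (f : α → β) (v : α →₀ ℂ) (δ : β) :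
    Finsupp.mapDomain f v δ = ∑ b ∈ v.support, if f b = δ then v b else 0 := by
  rw [Finsupp.mapDomain, Finsupp.sum_apply]
  exact Finset.sum_congr rfl fun b _ => Finsupp.single_apply

lemma mapDomain_prodmap_eg (τ : Equiv.Perm (Fin d)) (g : Fin d → Fin n) :
    Finsupp.mapDomain (Prod.map τ id) (eg g) = eg (g ∘ τ.symm) := by
  rw [eg, show Finsupp.mapDomain (α := Fin d × Fin n) (M := ℕ) (Prod.map τ id)
      = ⇑(Finsupp.mapDomain.addMonoidHom (Prod.map τ id)) from rfl, map_sum]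
  simp only [Finsupp.mapDomain.addMonoidHom_apply, Finsupp.mapDomain_single]
  rw [eg, ← Equiv.sum_comp τ (fun i' => Finsupp.single (i', (g ∘ τ.symm) i') (1 : ℕ))]
  refine Finset.sum_congr rfl fun i _ => ?_
  simp [Prod.map]

lemma coeff_eg_eq_of_cnt {F : MvPolynomial (Fin d × Fin n) ℂ} (hsym : IsSymm n d F)
    {g h : Fin d → Fin n} (hc : cnt g = cnt h) :
    MvPolynomial.coeff (eg g) F = MvPolynomial.coeff (eg h) F := by
  obtain ⟨τ, hgh⟩ := exists_perm_comp hc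
  have hinj : Function.Injective (Prod.map (τ.symm : Fin d → Fin d) (id : Fin n → Fin n)) :=
    Function.Injective.prodMap τ.symm.injective Function.injective_id
  have h1 : eg g = Finsupp.mapDomain (Prod.map (τ.symm : Fin d → Fin d) id) (eg h) := by
    rw [mapDomain_prodmap_eg τ.symm h, Equiv.symm_symm, hgh]
  calc MvPolynomial.coeff (eg g) F
      = MvPolynomial.coeff (Finsupp.mapDomain (Prod.map (τ.symm : Fin d → Fin d) id) (eg h))
        (MvPolynomial.rename (Prod.map (τ.symm : Fin d → Fin d) id) F) := by
        rw [h1, hsym τ.symm]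
    _ = MvPolynomial.coeff (eg h) F := MvPolynomial.coeff_rename_mapDomain _ hinj F (eg h)

lemma coeff_rename_eq' {σ τ : Type*} (f : σ → τ) (p : MvPolynomial σ ℂ) :
    AddMonoidAlgebra.coeff (MvPolynomial.rename f p)
      = Finsupp.mapDomain (Finsupp.mapDomain f) (AddMonoidAlgebra.coeff p) := rfl

lemma coeff_rename_apply' {σ τ : Type*} (f : σ → τ) (p : MvPolynomial σ ℂ) (δ : τ →₀ ℕ) :
    MvPolynomial.coeff δ (MvPolynomial.rename f p)
      = Finsupp.mapDomain (Finsupp.mapDomain f) (AddMonoidAlgebra.coeff p) δ := rfl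

lemma pF_support_deg {F : MvPolynomial (Fin d × Fin n) ℂ} (hF : ∀ a ∈ F.support, ML n d a) :
    ∀ δ ∈ (MvPolynomial.rename (Prod.snd : Fin d × Fin n → Fin n) F).support,
      ∑ j, δ j = d := by
  classical
  intro δ hδ
  rw [← MvPolynomial.finsupp_support_eq_support, coeff_rename_eq'] at hδ
  obtain ⟨a, ha, rfl⟩ := Finset.mem_image.mp (Finsupp.mapDomain_support hδ)
  obtain ⟨g, rfl⟩ := ML_iff.mp (hF a ha)
  rw [mapDomain_snd_eg]
  exact sum_cnt g

lemma coeff_pF_mul {F : MvPolynomial (Fin d × Fin n) ℂ} (hF : F ∈ Scomp n d fun _ => 1)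
    (hsym : IsSymm n d F) (g : Fin d → Fin n) :
    MvPolynomial.coeff (cnt g) (pF n d F) * (Gammafac (cnt g) : ℂ)
      = (d.factorial : ℂ) * MvPolynomial.coeff (eg g) F := by
  classical
  have hFsup := mem_Scomp_one_iff.mp hF
  have hcoeff : MvPolynomial.coeff (cnt g) (pF n d F)
      = ∑ b ∈ F.support, if Finsupp.mapDomain Prod.snd b = cnt g
          then MvPolynomial.coeff b F else 0 := by
    rw [pF, coeff_rename_apply']
    exact coeff_mapDomain_apply _ _ _
  by_cases hz : MvPolynomial.coeff (eg g) F = 0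
  · have hzero : ∀ b ∈ F.support,
        (if Finsupp.mapDomain Prod.snd b = cnt g then MvPolynomial.coeff b F else 0) = 0 := by
      intro b hb
      split_ifs with hbc
      · obtain ⟨h, rfl⟩ := ML_iff.mp (hFsup b hb)
        rw [mapDomain_snd_eg] at hbc
        rw [coeff_eg_eq_of_cnt hsym hbc]
        exact hz
      · rfl
    rw [hz, mul_zero, hcoeff, Finset.sum_congr rfl hzero, Finset.sum_const_zero, zero_mul]
  · have hTeq : F.support.filter (fun b => Finsupp.mapDomain Prod.snd b = cnt g)
        = (Finset.univ.filter fun h : Fin d → Fin n => cnt h = cnt g).image eg := by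
      ext b
      simp only [Finset.mem_filter, Finset.mem_image, Finset.mem_univ, true_and]
      constructor
      · rintro ⟨hb, hbc⟩
        obtain ⟨h, rfl⟩ := ML_iff.mp (hFsup b hb)
        rw [mapDomain_snd_eg] at hbc
        exact ⟨h, hbc, rfl⟩
      · rintro ⟨h, hch, rfl⟩
        refine ⟨?_, by rw [mapDomain_snd_eg]; exact hch⟩
        rw [MvPolynomial.mem_support_iff, coeff_eg_eq_of_cnt hsym hch]
        exact hz
    have hconst : ∀ b ∈ F.support.filter (fun b => Finsupp.mapDomain Prod.snd b = cnt g),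
        MvPolynomial.coeff b F = MvPolynomial.coeff (eg g) F := by
      intro b hb
      obtain ⟨hb1, hb2⟩ := Finset.mem_filter.mp hb
      obtain ⟨h, rfl⟩ := ML_iff.mp (hFsup b hb1)
      rw [mapDomain_snd_eg] at hb2
      exact coeff_eg_eq_of_cnt hsym hb2
    have hNG : (((Finset.univ.filter fun h : Fin d → Fin n => cnt h = cnt g).card : ℂ))
        * (Gammafac (cnt g) : ℂ) = (d.factorial : ℂ) := by
      rw [← Nat.cast_mul, Gammafac_eq_univ]
      norm_cast
      exact card_cnt_mul g
    rw [hcoeff, ← Finset.sum_filter, Finset.sum_congr rfl hconst, Finset.sum_const, hTeq,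
      Finset.card_image_of_injective _ eg_injective, nsmul_eq_mul, mul_right_comm, hNG]

lemma star_eq {F ψ : MvPolynomial (Fin d × Fin n) ℂ} (hF : F ∈ Scomp n d fun _ => 1)
    (hsym : IsSymm n d F) (hψ : ∀ a ∈ ψ.support, ML n d a) :
    ∑ γ ∈ (MvPolynomial.rename (Prod.snd : Fin d × Fin n → Fin n) ψ).support,
        MvPolynomial.coeff γ (MvPolynomial.rename (Prod.snd : Fin d × Fin n → Fin n) ψ) *
          (MvPolynomial.coeff γ (pF n d F) * (Gammafac γ : ℂ))
      = (d.factorial : ℂ) *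
        ∑ a ∈ ψ.support, MvPolynomial.coeff a ψ * MvPolynomial.coeff a F := by
  classical
  have h1 : ∑ γ ∈ (MvPolynomial.rename (Prod.snd : Fin d × Fin n → Fin n) ψ).support,
        MvPolynomial.coeff γ (MvPolynomial.rename (Prod.snd : Fin d × Fin n → Fin n) ψ) *
          (MvPolynomial.coeff γ (pF n d F) * (Gammafac γ : ℂ))
      = (Finsupp.mapDomain (Finsupp.mapDomain Prod.snd) (AddMonoidAlgebra.coeff ψ)).sum
          (fun γ c => c * (MvPolynomial.coeff γ (pF n d F) * (Gammafac γ : ℂ))) := by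
    rw [← coeff_rename_eq']
    rfl
  rw [h1, Finsupp.sum_mapDomain_index (fun γ => by rw [zero_mul])
    (fun γ c1 c2 => by rw [add_mul])]
  rw [Finsupp.sum_congr (g2 := fun a c => c * ((d.factorial : ℂ) * MvPolynomial.coeff a F))
    (fun a ha => by
      obtain ⟨g, hg⟩ := ML_iff.mp (hψ a ha)
      rw [← hg, mapDomain_snd_eg, coeff_pF_mul hF hsym g])]
  rw [Finset.mul_sum]
  exact Finset.sum_congr rfl fun a _ =>
    mul_left_comm (MvPolynomial.coeff a ψ) (d.factorial : ℂ) (MvPolynomial.coeff a F)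

end Lemma36

/-- Lemma 3.6: for a symmetric tensor `F`,
`π(Ann(F)_𝟏) = Ann(p_F)_d`. -/
theorem stmt_3 (n d : ℕ) (hn : 0 < n) (hd : 0 < d)
    (F : MvPolynomial (Fin d × Fin n) ℂ)
    (hF : F ∈ Scomp n d fun _ => 1) (hsym : IsSymm n d F) :
    Submodule.map (piL n d) (ann F ⊓ Scomp n d fun _ => 1) =
      ann (pF n d F) ⊓ Vcomp n d := by
  classical
  have hFsup : ∀ a ∈ F.support, ML n d a := mem_Scomp_one_iff.mp hF
  have hpsup : ∀ δ ∈ (pF n d F).support, ∑ j, δ j = d := pF_support_deg hFsup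
  have hdfac : (d.factorial : ℂ) ≠ 0 := Nat.cast_ne_zero.mpr (Nat.factorial_ne_zero d)
  ext q
  simp only [Submodule.mem_map, Submodule.mem_inf]
  constructor
  · rintro ⟨ψ, ⟨hann, hcomp⟩, rfl⟩
    have hψsup : ∀ a ∈ ψ.support, ML n d a := mem_Scomp_one_iff.mp hcomp
    have hπ : piL n d ψ = MvPolynomial.rename Prod.snd ψ := by rw [MvPolynomial.rename_eq_aeval]; rfl
    have hqdeg : ∀ γ ∈ (MvPolynomial.rename (Prod.snd : Fin d × Fin n → Fin n) ψ).support,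
        ∑ j, γ j = d := pF_support_deg hψsup
    constructor
    · rw [hπ, mem_ann_poly hpsup hqdeg, star_eq hF hsym hψsup,
        (mem_ann_tensor hFsup hψsup).mp hann, mul_zero]
    · rw [hπ, mem_Vcomp_iff]
      exact hqdeg
  · rintro ⟨hqann, hqV⟩
    have hqdeg : ∀ γ ∈ q.support, ∑ j, γ j = d := mem_Vcomp_iff.mp hqV
    set ℓ : (Fin n →₀ ℕ) → ((Fin d × Fin n) →₀ ℕ) := fun δ =>
      if h : ∃ g : Fin d → Fin n, cnt g = δ then eg h.choose else 0 with hℓ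
    set ψ : MvPolynomial (Fin d × Fin n) ℂ := AddMonoidAlgebra.mapDomain ℓ q with hψ
    have hℓML : ∀ δ ∈ q.support, ML n d (ℓ δ) ∧ Finsupp.mapDomain Prod.snd (ℓ δ) = δ := by
      intro δ hδ
      have hex : ∃ g : Fin d → Fin n, cnt g = δ := exists_cnt d δ (hqdeg δ hδ)
      rw [hℓ]
      simp only [dif_pos hex]
      exact ⟨ML_eg _, by rw [mapDomain_snd_eg]; exact hex.choose_spec⟩
    have hψsup : ∀ a ∈ ψ.support, ML n d a := by
      intro a ha
      rw [hψ] at ha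
      obtain ⟨δ, hδ, rfl⟩ := Finset.mem_image.mp (Finsupp.mapDomain_support ha)
      exact (hℓML δ hδ).1
    have hrψ : MvPolynomial.rename (Prod.snd : Fin d × Fin n → Fin n) ψ = q := by
      apply AddMonoidAlgebra.coeff_injective
      rw [coeff_rename_eq', hψ, AddMonoidAlgebra.coeff_mapDomain, ← Finsupp.mapDomain_comp]
      rw [Finsupp.mapDomain_congr (g := id) (fun δ hδ => by
        simp only [Function.comp_apply]
        exact (hℓML δ hδ).2)]
      exact Finsupp.mapDomain_id
    have hπψ : piL n d ψ = q := by rw [← hrψ, MvPolynomial.rename_eq_aeval]; rfl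
    refine ⟨ψ, ⟨?_, mem_Scomp_one_iff.mpr hψsup⟩, hπψ⟩
    rw [mem_ann_tensor hFsup hψsup]
    have hstar := star_eq hF hsym hψsup
    rw [hrψ, (mem_ann_poly hpsup hqdeg).mp hqann] at hstar
    exact (mul_eq_zero.mp hstar.symm).resolve_left hdfac

end BorderComon
end
end
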